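/- Let F be a field, G an F*-graph with adjacency matrix M on V, λ ∈ F*, x a vertex, and M' the matrix of the λ-local complementation of G at x. Then for every subset X ⊆ V: rk(M'[X, V\X]) + rk(M'[V\X, X]) = rk(M[X, V\X]) + rk(M[V\X, X]). That is, λ-local complementation preserves the bi-cut-rank function. -/

import Mathlib

noncomputable def rkSub {V W F : Type*} [Fintype V] [Fintype W] [Field F]
    (M : Matrix V W F) (X : Finset V) (Y : Finset W) : ℕ :=
  (M.submatrix (fun i : X => (i : V)) (fun j : Y => (j : W))).rank

lemma rowOp_rank {n m F : Type*} [Fintype n] [Fintype m] [DecidableEq n] [Field F]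
    (x0 : n) (c : n → F) (hc : c x0 = 0) (B B' : Matrix n m F)
    (hB' : ∀ i j, B' i j = B i j + c i * B x0 j) : B'.rank = B.rank := by
  set u : Matrix n n F := Matrix.of fun i j => if j = x0 then c i else 0 with hu
  have huC : ∀ (C : Matrix n m F) (i : n) (j : m), (u * C) i j = c i * C x0 j := by
    intro C i j
    simp [hu, Matrix.mul_apply, ite_mul, Finset.sum_ite_eq']
  have huu : u * u = 0 := by
    ext i j
    simp [hu, Matrix.mul_apply, ite_mul, mul_ite, Finset.sum_ite_eq', hc]
  have hB : B' = (1 + u) * B := by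
    ext i j
    simp only [Matrix.add_mul, Matrix.one_mul, Matrix.add_apply, huC, hB']
  have h1 : (1 + u) * (1 - u) = 1 := by
    rw [mul_sub, mul_one, add_mul, one_mul, huu]
    abel
  have hdet : IsUnit (1 + u).det :=
    IsUnit.of_mul_eq_one _ (by rw [← Matrix.det_mul, h1, Matrix.det_one])
  rw [hB, Matrix.rank_mul_eq_right_of_isUnit_det _ _ hdet]

lemma colOp_rank {n m F : Type*} [Fintype n] [Fintype m] [DecidableEq m] [Field F]
    (x0 : m) (d : m → F) (hd : d x0 = 0) (B B' : Matrix n m F)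
    (hB' : ∀ i j, B' i j = B i j + B i x0 * d j) : B'.rank = B.rank := by
  calc B'.rank = B'.transpose.rank := (Matrix.rank_transpose B').symm
    _ = B.transpose.rank := rowOp_rank x0 d hd B.transpose B'.transpose (fun j i => by
          simp only [Matrix.transpose_apply, hB' i j]; ring)
    _ = B.rank := Matrix.rank_transpose B

/-- λ-local complementation preserves the bi-cut-rank function. -/
theorem localComp_bicutrank {F V : Type*} [Field F] [Fintype V] [DecidableEq V]
    (M : Matrix V V F)
    (x : V) (l : F) (hl : l ≠ 0)
    (M' : Matrix V V F)
    (hM' : ∀ z t : V,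
      M' z t = if z ≠ x ∧ t ≠ x then M z t + l * M z x * M x t else M z t) :
    ∀ X : Finset V,
      rkSub M' X Xᶜ + rkSub M' Xᶜ X = rkSub M X Xᶜ + rkSub M Xᶜ X := by
  have key : ∀ (X Y : Finset V) (hx : x ∈ X) (hy : x ∉ Y),
      rkSub M' X Y = rkSub M X Y ∧ rkSub M' Y X = rkSub M Y X := by
    intro X Y hx hy
    constructor
    · -- rows indexed by X contain x : row operations
      refine rowOp_rank (⟨x, hx⟩ : X) (fun i => if (i : V) = x then 0 else l * M i x)
        (by simp) _ _ ?_
      rintro ⟨i, hi⟩ ⟨j, hj⟩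
      have hjx : j ≠ x := fun h => hy (h ▸ hj)
      by_cases hix : i = x
      · simp [Matrix.submatrix_apply, hM', hix]
      · simp [Matrix.submatrix_apply, hM', hix, hjx, mul_assoc]
    · -- columns indexed by X contain x : column operations
      refine colOp_rank (⟨x, hx⟩ : X) (fun j => if (j : V) = x then 0 else l * M x j)
        (by simp) _ _ ?_
      rintro ⟨i, hi⟩ ⟨j, hj⟩
      have hix : i ≠ x := fun h => hy (h ▸ hi)
      by_cases hjx : j = x
      · simp [Matrix.submatrix_apply, hM', hjx]
      · simp [Matrix.submatrix_apply, hM', hix, hjx]; ring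
  intro X
  by_cases hx : x ∈ X
  · obtain ⟨h1, h2⟩ := key X Xᶜ hx (by simp [hx])
    rw [h1, h2]
  · obtain ⟨h1, h2⟩ := key Xᶜ X (by simp [hx]) hx
    rw [h1, h2]
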